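/- For the turn-based game graph of Figure 1, for every set P ⊆ V and every initial node v ∈ V, at least one of the following fails: (i) player 1 realizes the recurrence property □◇P from v; (ii) player 0 realizes the property □◇P → □◇G from v, where G = {s6}. In other words, no weak fairness assumption given by a set of nodes makes the pair of contracts mutually realizable. -/

import Mathlib

namespace Fig1

/-- Nodes `s0, …, s7` of the game graph of Figure 1. -/
abbrev V := Fin 8

/-- Player 0 owns the odd-indexed nodes `s1, s3, s5, s7`;
player 1 owns the even-indexed nodes `s0, s2, s4, s6`. -/
def owner : V → Fin 2 := fun v => if v.val % 2 = 1 then 0 else 1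

/-- The edge relation of player `j`:
`ρ0 = {s1→s0, s1→s2, s3→s2, s3→s4, s5→s6, s7→s1}` and
`ρ1 = {s0→s1, s2→s3, s4→s1, s4→s5, s6→s7}`. -/
def ρ : Fin 2 → V → V → Prop := fun j v u =>
  ((j.val, v.val, u.val) : ℕ × ℕ × ℕ) ∈
    [(0,1,0), (0,1,2), (0,3,2), (0,3,4), (0,5,6), (0,7,1),
     (1,0,1), (1,2,3), (1,4,1), (1,4,5), (1,6,7)]

/-- An infinite play: every step is an edge of the player owning the current node. -/
def IsPlay (w : ℕ → V) : Prop := ∀ k : ℕ, ρ (owner (w k)) (w k) (w (k + 1))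

/-- A strategy maps a finite history together with the current node to the next node. -/
abbrev Strategy := List V → V → V

/-- A strategy of player `j` must choose edges of `ρ j` at nodes owned by player `j`. -/
def ValidStrategy (j : Fin 2) (σ : Strategy) : Prop :=
  ∀ (h : List V) (v : V), owner v = j → ρ j v (σ h v)

/-- A play is consistent with a strategy of player `j` if at every position owned
by player `j`, the next node is the one chosen by the strategy. -/
def Consistent (j : Fin 2) (σ : Strategy) (w : ℕ → V) : Prop :=
  ∀ k : ℕ, owner (w k) = j → w (k + 1) = σ ((List.range k).map w) (w k)

/-- `□◇P`: the play visits `P` infinitely often. -/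
def InfOften (P : Set V) (w : ℕ → V) : Prop := ∀ N : ℕ, ∃ k ≥ N, w k ∈ P

/-- Player `j` realizes property `φ` from node `v`. -/
def Realizes (j : Fin 2) (v : V) (φ : (ℕ → V) → Prop) : Prop :=
  ∃ σ : Strategy, ValidStrategy j σ ∧
    ∀ w : ℕ → V, IsPlay w → w 0 = v → Consistent j σ w → φ w

-- Auxiliary material

instance (j : Fin 2) (x y : V) : Decidable (ρ j x y) := by
  unfold ρ; infer_instance

/-- Combined play of a player-0 strategy against a player-1 strategy,
keeping track of the history. -/
def playAux (σ0 σ1 : Strategy) (v : V) : ℕ → List V × V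
  | 0 => ([], v)
  | k+1 =>
    let p := playAux σ0 σ1 v k
    (p.1 ++ [p.2], if owner p.2 = 0 then σ0 p.1 p.2 else σ1 p.1 p.2)

/-- The combined play. -/
def ply (σ0 σ1 : Strategy) (v : V) (k : ℕ) : V := (playAux σ0 σ1 v k).2

lemma playAux_fst (σ0 σ1 : Strategy) (v : V) :
    ∀ k, (playAux σ0 σ1 v k).1 = (List.range k).map (ply σ0 σ1 v)
  | 0 => by simp [playAux]
  | k+1 => by
      simp [playAux, playAux_fst σ0 σ1 v k, List.range_succ, ply]

lemma ply_succ (σ0 σ1 : Strategy) (v : V) (k : ℕ) :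
    ply σ0 σ1 v (k+1) =
      (if owner (ply σ0 σ1 v k) = 0
        then σ0 ((List.range k).map (ply σ0 σ1 v)) (ply σ0 σ1 v k)
        else σ1 ((List.range k).map (ply σ0 σ1 v)) (ply σ0 σ1 v k)) := by
  have h := playAux_fst σ0 σ1 v k
  simp only [ply, playAux]
  rw [h]
  rfl

lemma owner_cases (x : V) : owner x = 0 ∨ owner x = 1 := by
  revert x; decide

lemma ply_isPlay {σ0 σ1 : Strategy} (h0 : ValidStrategy 0 σ0)
    (h1 : ValidStrategy 1 σ1) (v : V) : IsPlay (ply σ0 σ1 v) := by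
  intro k
  rcases owner_cases (ply σ0 σ1 v k) with h | h
  · rw [h, ply_succ, if_pos h]; exact h0 _ _ h
  · rw [h, ply_succ, if_neg (by rw [h]; decide)]; exact h1 _ _ h

lemma ply_consistent0 (σ0 σ1 : Strategy) (v : V) :
    Consistent 0 σ0 (ply σ0 σ1 v) := by
  intro k hk
  rw [ply_succ, if_pos hk]

lemma ply_consistent1 (σ0 σ1 : Strategy) (v : V) :
    Consistent 1 σ1 (ply σ0 σ1 v) := by
  intro k hk
  rw [ply_succ, if_neg (by rw [hk]; decide)]

/-- One step of a play where player 0 uses the memoryless strategy `d`. -/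
abbrev Step1 (d : V → V) (x y : V) : Prop :=
  (owner x = 0 ∧ y = d x) ∨ (owner x = 1 ∧ ρ 1 x y)

/-- One step of a play where player 1 uses the memoryless strategy `d`. -/
abbrev Step0 (d : V → V) (x y : V) : Prop :=
  (owner x = 0 ∧ ρ 0 x y) ∨ (owner x = 1 ∧ y = d x)

lemma step1_holds {σ1 : Strategy} (h1 : ValidStrategy 1 σ1) (d : V → V)
    (hd : ValidStrategy 0 (fun _ x => d x)) (v : V) (k : ℕ) :
    Step1 d (ply (fun _ x => d x) σ1 v k) (ply (fun _ x => d x) σ1 v (k+1)) := by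
  rcases owner_cases (ply (fun _ x => d x) σ1 v k) with h | h
  · exact Or.inl ⟨h, by rw [ply_succ, if_pos h]⟩
  · refine Or.inr ⟨h, ?_⟩
    have hp := ply_isPlay hd h1 v k
    rwa [h] at hp

lemma step0_holds {σ0 : Strategy} (h0 : ValidStrategy 0 σ0) (d : V → V)
    (hd : ValidStrategy 1 (fun _ x => d x)) (v : V) (k : ℕ) :
    Step0 d (ply σ0 (fun _ x => d x) v k) (ply σ0 (fun _ x => d x) v (k+1)) := by
  rcases owner_cases (ply σ0 (fun _ x => d x) v k) with h | h
  · refine Or.inl ⟨h, ?_⟩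
    have hp := ply_isPlay h0 hd v k
    rwa [h] at hp
  · exact Or.inr ⟨h, by rw [ply_succ, if_neg (by rw [h]; decide)]⟩

/-- Ranking-function argument: a set with a strictly decreasing potential
outside it is eventually reached. -/
lemma reach (w : ℕ → V) (φ : V → ℕ) (S : V → Prop)
    (h : ∀ k, ¬ S (w k) → φ (w (k+1)) < φ (w k)) : ∃ j, S (w j) := by
  by_contra hc
  push_neg at hc
  have hmono : ∀ k, φ (w k) + k ≤ φ (w 0) := by
    intro k
    induction k with
    | zero => simp
    | succ n ih => have := h n (hc n); omega
  have := hmono (φ (w 0) + 1)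
  omega

/-- Memoryless player-0 strategy `1→0, 3→4, 5→6, 7→1` (traps plays in `{0,1}`). -/
def dA : V → V := ![0, 0, 0, 4, 0, 6, 0, 1]

/-- Memoryless player-0 strategy `1→2, 3→2, 5→6, 7→1` (traps plays in `{2,3}`). -/
def dD : V → V := ![0, 2, 0, 2, 0, 6, 0, 1]

/-- Memoryless player-1 strategy `0→1, 2→3, 4→1, 6→7` (avoids `s6` forever). -/
def dC : V → V := ![1, 0, 3, 0, 1, 0, 7, 0]

/-- in the game of Figure 1, no set of nodes `P` makes the pair of
contracts mutually realizable: for every `P ⊆ V` and initial node `v`, it is not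
the case that player 1 realizes `□◇P` from `v` and player 0 realizes
`□◇P → □◇G` from `v`, where `G = {s6}`. -/
theorem no_weak_fairness_assumption (P : Set V) (v : V) :
    ¬ (Realizes 1 v (InfOften P) ∧
       Realizes 0 v (fun w => InfOften P w → InfOften ({6} : Set V) w)) := by
  rintro ⟨⟨σ1, hv1, hg1⟩, ⟨σ0, hv0, hg0⟩⟩
  have hvA : ValidStrategy 0 (fun _ x => dA x) := by
    have h : ∀ x : V, owner x = 0 → ρ 0 x (dA x) := by decide
    exact fun _ x hx => h x hx
  have hvD : ValidStrategy 0 (fun _ x => dD x) := by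
    have h : ∀ x : V, owner x = 0 → ρ 0 x (dD x) := by decide
    exact fun _ x hx => h x hx
  have hvC : ValidStrategy 1 (fun _ x => dC x) := by
    have h : ∀ x : V, owner x = 1 → ρ 1 x (dC x) := by decide
    exact fun _ x hx => h x hx
  -- Part 1a: playing `dD` against `σ1` traps the play in `{2,3}`, so `P` meets `{2,3}`.
  have h23 : (2 : V) ∈ P ∨ (3 : V) ∈ P := by
    set w := ply (fun _ x => dD x) σ1 v with hw
    have hstep : ∀ k, Step1 dD (w k) (w (k+1)) := step1_holds hv1 dD hvD v
    have hio : InfOften P w :=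
      hg1 w (ply_isPlay hvD hv1 v) rfl (ply_consistent1 _ _ _)
    have hdec : ∀ x y : V, Step1 dD x y → ¬(x = 2 ∨ x = 3) →
        (![2,1,0,0,5,4,3,2] : V → ℕ) y < (![2,1,0,0,5,4,3,2] : V → ℕ) x := by
      decide
    have habs : ∀ x y : V, Step1 dD x y → (x = 2 ∨ x = 3) → (y = 2 ∨ y = 3) := by
      decide
    obtain ⟨j, hj⟩ := reach w (![2,1,0,0,5,4,3,2] : V → ℕ) (fun x => x = 2 ∨ x = 3)
      (fun k h => hdec _ _ (hstep k) h)
    have hall : ∀ k, j ≤ k → (w k = 2 ∨ w k = 3) := by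
      intro k hk
      induction k, hk using Nat.le_induction with
      | base => exact hj
      | succ n hn ih => exact habs _ _ (hstep n) ih
    obtain ⟨k, hk, hkP⟩ := hio j
    rcases hall k hk with h | h
    · exact Or.inl (by rw [← h]; exact hkP)
    · exact Or.inr (by rw [← h]; exact hkP)
  -- Part 1b: playing `dA` against `σ1` traps the play in `{0,1}`, so `P` meets `{0,1}`.
  have h01 : (0 : V) ∈ P ∨ (1 : V) ∈ P := by
    set w := ply (fun _ x => dA x) σ1 v with hw
    have hstep : ∀ k, Step1 dA (w k) (w (k+1)) := step1_holds hv1 dA hvA v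
    have hio : InfOften P w :=
      hg1 w (ply_isPlay hvA hv1 v) rfl (ply_consistent1 _ _ _)
    have hdec : ∀ x y : V, Step1 dA x y → ¬(x = 0 ∨ x = 1) →
        (![0,0,6,5,4,3,2,1] : V → ℕ) y < (![0,0,6,5,4,3,2,1] : V → ℕ) x := by
      decide
    have habs : ∀ x y : V, Step1 dA x y → (x = 0 ∨ x = 1) → (y = 0 ∨ y = 1) := by
      decide
    obtain ⟨j, hj⟩ := reach w (![0,0,6,5,4,3,2,1] : V → ℕ) (fun x => x = 0 ∨ x = 1)
      (fun k h => hdec _ _ (hstep k) h)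
    have hall : ∀ k, j ≤ k → (w k = 0 ∨ w k = 1) := by
      intro k hk
      induction k, hk using Nat.le_induction with
      | base => exact hj
      | succ n hn ih => exact habs _ _ (hstep n) ih
    obtain ⟨k, hk, hkP⟩ := hio j
    rcases hall k hk with h | h
    · exact Or.inl (by rw [← h]; exact hkP)
    · exact Or.inr (by rw [← h]; exact hkP)
  -- Part 2: play `dC` against `σ0`.
  set u := ply σ0 (fun _ x => dC x) v with hu
  have hstep : ∀ k, Step0 dC (u k) (u (k+1)) := step0_holds hv0 dC hvC v
  have himp : InfOften P u → InfOften ({6} : Set V) u :=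
    hg0 u (ply_isPlay hv0 hvC v) rfl (ply_consistent0 _ _ _)
  -- `s6` is visited at most once at the start of `u`.
  have hno6 : ¬ InfOften ({6} : Set V) u := by
    have f5 : ∀ x y : V, Step0 dC x y → y ≠ 5 := by decide
    have f6 : ∀ x y : V, Step0 dC x y → y = 6 → x = 5 := by decide
    intro h
    obtain ⟨k, hk, hk6⟩ := h 2
    obtain ⟨m, rfl⟩ : ∃ m, k = m + 2 := ⟨k - 2, by omega⟩
    have h6 : u (m + 2) = 6 := Set.mem_singleton_iff.mp hk6
    exact f5 _ _ (hstep m) (f6 _ _ (hstep (m + 1)) h6)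
  have hnP : ¬ InfOften P u := fun h => hno6 (himp h)
  unfold InfOften at hnP
  push_neg at hnP
  obtain ⟨N, hN⟩ := hnP
  by_cases hio23 : ∀ M : ℕ, ∃ k ≥ M, (u k = 2 ∨ u k = 3)
  · -- `u` visits `{2,3}` infinitely often, hence both `2` and `3` infinitely often.
    have f3 : ∀ x y : V, Step0 dC x y → y = 3 → x = 2 := by decide
    have f2 : ∀ x y : V, Step0 dC x y → x = 2 → y = 3 := by decide
    obtain ⟨k, hk, hk23⟩ := hio23 (N + 1)
    rcases h23 with h2P | h3P
    · rcases hk23 with h | h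
      · exact hN k (by omega) (by rw [h]; exact h2P)
      · obtain ⟨m, rfl⟩ : ∃ m, k = m + 1 := ⟨k - 1, by omega⟩
        have hm : u m = 2 := f3 _ _ (hstep m) h
        exact hN m (by omega) (by rw [hm]; exact h2P)
    · rcases hk23 with h | h
      · have hk1 : u (k + 1) = 3 := f2 _ _ (hstep k) h
        exact hN (k + 1) (by omega) (by rw [hk1]; exact h3P)
      · exact hN k (by omega) (by rw [h]; exact h3P)
  · -- `u` eventually avoids `{2,3}`, hence it ends up alternating in `{0,1}`.
    push_neg at hio23
    obtain ⟨M, hM⟩ := hio23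
    have fdec : ∀ x y : V, Step0 dC x y → x ≠ 2 → x ≠ 3 → ¬(x = 0 ∨ x = 1) →
        (![0,0,9,9,1,3,2,1] : V → ℕ) y < (![0,0,9,9,1,3,2,1] : V → ℕ) x := by
      decide
    obtain ⟨j, hj⟩ := reach (fun k => u (M + k)) (![0,0,9,9,1,3,2,1] : V → ℕ)
      (fun x => x = 0 ∨ x = 1)
      (fun k h => fdec _ _ (hstep (M + k)) (hM (M + k) (Nat.le_add_right _ _)).1
        (hM (M + k) (Nat.le_add_right _ _)).2 h)
    have habs : ∀ x y : V, Step0 dC x y → y ≠ 2 → (x = 0 ∨ x = 1) → (y = 0 ∨ y = 1) := by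
      decide
    have hall : ∀ k, M + j ≤ k → (u k = 0 ∨ u k = 1) := by
      intro k hk
      induction k, hk using Nat.le_induction with
      | base => exact hj
      | succ n hn ih =>
        have h2 : u (n + 1) ≠ 2 := (hM (n + 1) (by omega)).1
        exact habs _ _ (hstep n) h2 ih
    have f01 : ∀ x y : V, Step0 dC x y → x = 0 → y = 1 := by decide
    have f10 : ∀ x y : V, Step0 dC x y → x = 1 → y ≠ 2 → y = 0 := by decide
    set K := max N (M + j) with hK
    have hK01 := hall K (le_max_right _ _)
    rcases h01 with h0P | h1P
    · rcases hK01 with h | h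
      · exact hN K (le_max_left _ _) (by rw [h]; exact h0P)
      · have h2 : u (K + 1) ≠ 2 := (hM (K + 1) (by omega)).1
        have hk1 : u (K + 1) = 0 := f10 _ _ (hstep K) h h2
        exact hN (K + 1) (by omega) (by rw [hk1]; exact h0P)
    · rcases hK01 with h | h
      · have hk1 : u (K + 1) = 1 := f01 _ _ (hstep K) h
        exact hN (K + 1) (by omega) (by rw [hk1]; exact h1P)
      · exact hN K (le_max_left _ _) (by rw [h]; exact h1P)

end Fig1
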